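/- There exists a universal constant C > 0 such that for every n ≥ 2, every real k* ≥ 0, every β ∈ (0,1], and every pair of node-adjacent n-node graphs G, G', one has |f(G) − f(G')| ≤ C·( (k_G + k*)·(1 + β·k_G) + 1/β ), where f, k_G are defined from the parameters k* and β as in the concentrated-degree estimator. -/

import Mathlib

open MeasureTheory Finset
open scoped Classical

noncomputable section

/-- Two `n`-node graphs are node-adjacent if every edge in the symmetric
difference of their edge sets is incident to a single vertex `i`. -/
def NodeAdjacent {n : ℕ} (G G' : SimpleGraph (Fin n)) : Prop :=
  ∃ i : Fin n, ∀ u v : Fin n, ¬ (G.Adj u v ↔ G'.Adj u v) → u = i ∨ v = i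

/-- `G` and `G'` are at node distance at most `c`: there is a path of length `c`
of consecutively node-adjacent graphs from `G` to `G'`. -/
def NodeDistLE {n : ℕ} (G G' : SimpleGraph (Fin n)) (c : ℕ) : Prop :=
  ∃ g : ℕ → SimpleGraph (Fin n), g 0 = G ∧ g c = G' ∧
    ∀ j < c, NodeAdjacent (g j) (g (j + 1))

/-- `(ε,δ)`-node-differential privacy for a randomized algorithm, viewed as a map
assigning to each graph a (probability) measure on the output space `R`. -/
def NodeDP {n : ℕ} {R : Type*} [MeasurableSpace R]
    (A : SimpleGraph (Fin n) → Measure R) (ε δ : ℝ) : Prop :=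
  ∀ G G' : SimpleGraph (Fin n), NodeAdjacent G G' → ∀ S : Set R, MeasurableSet S →
    ((A G) S).toReal ≤ Real.exp ε * ((A G') S).toReal + δ

/-- Number of edges of `G`. -/
def edgeCount {n : ℕ} (G : SimpleGraph (Fin n)) : ℕ := G.edgeSet.ncard

/-- The empirical edge density `p_G = |E| / C(n,2)`. -/
def edgeDensity {n : ℕ} (G : SimpleGraph (Fin n)) : ℝ :=
  (edgeCount G : ℝ) / (n.choose 2 : ℝ)

/-- Degree of a vertex. -/
def deg {n : ℕ} (G : SimpleGraph (Fin n)) (v : Fin n) : ℕ := (G.neighborSet v).ncard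

/-- Average degree `d̄_G = 2|E|/n  ( = (n-1)·p_G )`. -/
def avgDeg {n : ℕ} (G : SimpleGraph (Fin n)) : ℝ := 2 * (edgeCount G : ℝ) / n

/-- `G ∈ 𝒢_{n,k}` : every degree lies in `[d̄ - k, d̄ + k]`. -/
def Concentrated {n : ℕ} (G : SimpleGraph (Fin n)) (k : ℝ) : Prop :=
  ∀ v : Fin n, |(deg G v : ℝ) - avgDeg G| ≤ k

/-- The number of vertices whose degree lies outside `[d̄_G - k* - 3m, d̄_G + k* + 3m]`. -/
def farCount {n : ℕ} (G : SimpleGraph (Fin n)) (kstar : ℝ) (m : ℕ) : ℕ :=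
  {v : Fin n | kstar + 3 * (m : ℝ) < |(deg G v : ℝ) - avgDeg G|}.ncard

/-- `k_G` : the smallest positive integer `m` such that at most `m` vertices have
degree outside `[d̄_G - k* - 3m, d̄_G + k* + 3m]`. -/
def kOf {n : ℕ} (G : SimpleGraph (Fin n)) (kstar : ℝ) : ℕ :=
  sInf {m : ℕ | 0 < m ∧ farCount G kstar m ≤ m}

/-- `t_v` : the distance from `deg_G(v)` to the interval `I_G`. -/
def tDist {n : ℕ} (G : SimpleGraph (Fin n)) (kstar : ℝ) (v : Fin n) : ℝ :=
  max 0 (|(deg G v : ℝ) - avgDeg G| - (kstar + 3 * (kOf G kstar : ℝ)))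

/-- The weight `wt_G(v) = max(0, 1 - β t_v)`. -/
def wt {n : ℕ} (G : SimpleGraph (Fin n)) (kstar β : ℝ) (v : Fin n) : ℝ :=
  max 0 (1 - β * tDist G kstar v)

/-- The value of the pair `{u,v}`:
`val_G({u,v}) = wt_G({u,v})·x_{uv} + (1 - wt_G({u,v}))·p_G`,
where `wt_G({u,v}) = min(wt_G(u), wt_G(v))`. -/
def valPair {n : ℕ} (G : SimpleGraph (Fin n)) (kstar β : ℝ) (u v : Fin n) : ℝ :=
  min (wt G kstar β u) (wt G kstar β v) * (if G.Adj u v then 1 else 0)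
    + (1 - min (wt G kstar β u) (wt G kstar β v)) * edgeDensity G

/-- `f(G)` : the sum of `val_G({u,v})` over unordered pairs of distinct vertices. -/
def fEst {n : ℕ} (G : SimpleGraph (Fin n)) (kstar β : ℝ) : ℝ :=
  (∑ u : Fin n, ∑ v : Fin n, if u ≠ v then valPair G kstar β u v else 0) / 2

/-- `f_u(G) = Σ_{v ≠ u} val_G({u,v})`. -/
def fVert {n : ℕ} (G : SimpleGraph (Fin n)) (kstar β : ℝ) (u : Fin n) : ℝ :=
  ∑ v ∈ Finset.univ.erase u, valPair G kstar β u v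

/-- The smooth upper bound
`S(G) = sup_{ℓ ≥ 0} e^{-βℓ} · C·((k_G+ℓ+k*)(1+β(k_G+ℓ)) + 1/β)`. -/
def smoothS {n : ℕ} (G : SimpleGraph (Fin n)) (kstar β C : ℝ) : ℝ :=
  ⨆ ℓ : {x : ℝ // 0 ≤ x},
    Real.exp (-β * (ℓ : ℝ)) *
      (C * (((kOf G kstar : ℝ) + (ℓ : ℝ) + kstar) * (1 + β * ((kOf G kstar : ℝ) + (ℓ : ℝ))) + 1 / β))

/-- The Student's t-distribution with 3 degrees of freedom, as a measure on `ℝ`. -/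
def studentT3 : Measure ℝ :=
  MeasureTheory.volume.withDensity
    (fun z => ENNReal.ofReal (2 / (Real.sqrt 3 * Real.pi * (1 + z ^ 2 / 3) ^ 2)))

/-- The disjoint union of cliques on `Fin n` given by a block-assignment `π`. -/
def cliqueUnion {n i : ℕ} (π : Fin n → Fin i) : SimpleGraph (Fin n) where
  Adj u v := u ≠ v ∧ π u = π v
  symm := ⟨fun u v h => ⟨Ne.symm h.1, h.2.symm⟩⟩
  loopless := ⟨fun u h => h.1 rfl⟩


section Basics

variable {n : ℕ}

lemma deg_eq_degree (G : SimpleGraph (Fin n)) (v : Fin n) : deg G v = G.degree v := by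
  rw [deg, Set.ncard_eq_toFinset_card', Set.toFinset_card,
    SimpleGraph.card_neighborSet_eq_degree]

lemma edgeCount_eq (G : SimpleGraph (Fin n)) : edgeCount G = G.edgeFinset.card := by
  rw [edgeCount, Set.ncard_eq_toFinset_card']
  congr 1


lemma edgeCount_le (G : SimpleGraph (Fin n)) : edgeCount G ≤ n.choose 2 := by
  rw [edgeCount_eq]
  simpa using SimpleGraph.card_edgeFinset_le_card_choose_two (G := G)

lemma edgeDensity_nonneg (G : SimpleGraph (Fin n)) : 0 ≤ edgeDensity G := by
  unfold edgeDensity; positivity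

lemma edgeDensity_le_one (hn : 2 ≤ n) (G : SimpleGraph (Fin n)) : edgeDensity G ≤ 1 := by
  have h : 0 < (n.choose 2 : ℝ) := by
    have : 0 < n.choose 2 := Nat.choose_pos (by omega)
    exact_mod_cast this
  rw [edgeDensity, div_le_one h]
  exact_mod_cast edgeCount_le G

lemma choose_cast (hn : 2 ≤ n) : (n.choose 2 : ℝ) = n * ((n:ℝ) - 1) / 2 := by
  rw [Nat.cast_choose_two]

/-- `p_G · (n-1) = d̄_G`. -/
lemma density_mul (hn : 2 ≤ n) (G : SimpleGraph (Fin n)) :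
    edgeDensity G * ((n:ℝ) - 1) = avgDeg G := by
  have h1 : (1:ℝ) ≤ (n:ℝ) - 1 := by
    have : (2:ℝ) ≤ n := by exact_mod_cast hn
    linarith
  have hn0 : (n:ℝ) ≠ 0 := by positivity
  rw [edgeDensity, avgDeg, choose_cast hn]
  field_simp

/-- row sum of adjacency indicators. -/
lemma sum_indicator (G : SimpleGraph (Fin n)) (v : Fin n) :
    ∑ u ∈ Finset.univ.erase v, (if G.Adj v u then (1:ℝ) else 0) = deg G v := by
  have h : ∑ u ∈ Finset.univ.erase v, (if G.Adj v u then (1:ℝ) else 0)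
      = ∑ u, (if G.Adj v u then (1:ℝ) else 0) := Finset.sum_erase _ (by simp)
  rw [h, Finset.sum_boole, deg_eq_degree, SimpleGraph.degree,
    SimpleGraph.neighborFinset_eq_filter]

lemma farCount_eq (G : SimpleGraph (Fin n)) (kstar : ℝ) (m : ℕ) :
    farCount G kstar m =
      (Finset.univ.filter (fun v => kstar + 3 * (m : ℝ) < |(deg G v : ℝ) - avgDeg G|)).card := by
  rw [farCount, Set.ncard_eq_toFinset_card', Set.toFinset_setOf]

lemma kOf_mem (hn : 2 ≤ n) (G : SimpleGraph (Fin n)) (kstar : ℝ) :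
    0 < kOf G kstar ∧ farCount G kstar (kOf G kstar) ≤ kOf G kstar := by
  have hne : {m : ℕ | 0 < m ∧ farCount G kstar m ≤ m}.Nonempty := by
    refine ⟨n, by omega, ?_⟩
    rw [farCount_eq]
    calc _ ≤ (Finset.univ : Finset (Fin n)).card := Finset.card_filter_le _ _
    _ = n := by simp
  exact Nat.sInf_mem hne

lemma wt_nonneg (G : SimpleGraph (Fin n)) (kstar β : ℝ) (v : Fin n) : 0 ≤ wt G kstar β v :=
  le_max_left _ _

lemma tDist_nonneg (G : SimpleGraph (Fin n)) (kstar : ℝ) (v : Fin n) : 0 ≤ tDist G kstar v :=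
  le_max_left _ _

lemma wt_le_one (hβ : 0 < β) (G : SimpleGraph (Fin n)) (kstar : ℝ) (v : Fin n) :
    wt G kstar β v ≤ 1 := by
  rw [wt]
  have := tDist_nonneg G kstar v
  have : β * tDist G kstar v ≥ 0 := by positivity
  apply max_le <;> linarith

/-- Vertices with weight < 1 are "far". -/
lemma badF_card_le (hn : 2 ≤ n) (hβ : 0 < β) (G : SimpleGraph (Fin n)) (kstar : ℝ) :
    (Finset.univ.filter (fun v => wt G kstar β v < 1)).card ≤ kOf G kstar := by
  have h2 := (kOf_mem hn G kstar).2
  rw [farCount_eq] at h2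
  refine le_trans (Finset.card_le_card ?_) h2
  intro v hv
  simp only [Finset.mem_filter, Finset.mem_univ, true_and] at hv ⊢
  by_contra hle
  push_neg at hle
  have ht : tDist G kstar v ≤ 0 := by
    rw [tDist]; apply max_le le_rfl; linarith
  have ht0 : tDist G kstar v = 0 := le_antisymm ht (tDist_nonneg G kstar v)
  rw [wt, ht0] at hv
  norm_num at hv

/-- If the weight is positive, the degree is near the average. -/
lemma deg_close_of_wt_pos (hβ : 0 < β) (G : SimpleGraph (Fin n)) (kstar : ℝ) {v : Fin n}
    (hv : 0 < wt G kstar β v) :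
    |(deg G v : ℝ) - avgDeg G| ≤ kstar + 3 * (kOf G kstar : ℝ) + 1 / β := by
  have ht : tDist G kstar v < 1 / β := by
    rw [wt] at hv
    rcases max_cases 0 (1 - β * tDist G kstar v) with ⟨he, _⟩ | ⟨he, _⟩
    · rw [he] at hv; exact absurd hv (lt_irrefl 0)
    · rw [he] at hv
      rw [lt_div_iff₀ hβ]
      nlinarith
  have h2 : |(deg G v : ℝ) - avgDeg G| - (kstar + 3 * (kOf G kstar : ℝ)) ≤ tDist G kstar v :=
    le_max_right _ _
  linarith

lemma valPair_mem (hn : 2 ≤ n) (hβ : 0 < β) (G : SimpleGraph (Fin n)) (kstar : ℝ) (u v : Fin n) :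
    valPair G kstar β u v ∈ Set.Icc (0:ℝ) 1 := by
  rw [valPair]
  set m := min (wt G kstar β u) (wt G kstar β v) with hm
  have hm0 : 0 ≤ m := le_min (wt_nonneg _ _ _ _) (wt_nonneg _ _ _ _)
  have hm1 : m ≤ 1 := le_trans (min_le_left _ _) (wt_le_one hβ _ _ _)
  have hp0 := edgeDensity_nonneg G
  have hp1 := edgeDensity_le_one hn G
  constructor
  · split <;> nlinarith
  · split <;> nlinarith

lemma valPair_comm (G : SimpleGraph (Fin n)) (kstar β : ℝ) (u v : Fin n) :
    valPair G kstar β u v = valPair G kstar β v u := by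
  rw [valPair, valPair, min_comm, SimpleGraph.adj_comm]

end Basics

section Compare

variable {n : ℕ} {G G' : SimpleGraph (Fin n)} {i : Fin n}

/-- abbreviation for the node-adjacency witness hypothesis -/
def Wit (G G' : SimpleGraph (Fin n)) (i : Fin n) : Prop :=
  ∀ u v : Fin n, ¬ (G.Adj u v ↔ G'.Adj u v) → u = i ∨ v = i

lemma Wit.symm (h : Wit G G' i) : Wit G' G i := by
  intro u v huv
  exact h u v (fun hiff => huv hiff.symm)

lemma adj_eq_of_ne (h : Wit G G' i) {u v : Fin n} (hu : u ≠ i) (hv : v ≠ i) :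
    G.Adj u v ↔ G'.Adj u v := by
  by_contra hc
  rcases h u v hc with h1 | h1 <;> [exact hu h1; exact hv h1]

lemma deg_le_deg (h : Wit G G' i) {v : Fin n} (hv : v ≠ i) :
    deg G v ≤ deg G' v + 1 := by
  rw [deg_eq_degree, deg_eq_degree, SimpleGraph.degree, SimpleGraph.degree]
  have hsub : G.neighborFinset v ⊆ insert i (G'.neighborFinset v) := by
    intro u hu
    rw [SimpleGraph.mem_neighborFinset] at hu
    by_cases hui : u = i
    · simp [hui]
    · rw [Finset.mem_insert, SimpleGraph.mem_neighborFinset]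
      exact Or.inr (((adj_eq_of_ne h hv hui).mp hu))
  calc (G.neighborFinset v).card ≤ (insert i (G'.neighborFinset v)).card :=
        Finset.card_le_card hsub
    _ ≤ (G'.neighborFinset v).card + 1 := Finset.card_insert_le _ _

lemma deg_diff_le (h : Wit G G' i) {v : Fin n} (hv : v ≠ i) :
    |(deg G v : ℝ) - (deg G' v : ℝ)| ≤ 1 := by
  have h1 := deg_le_deg h hv
  have h2 := deg_le_deg h.symm hv
  rw [abs_sub_le_iff]
  constructor <;> [skip; skip] <;>
    · push_cast
      have : (deg G v : ℝ) ≤ (deg G' v : ℝ) + 1 := by exact_mod_cast h1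
      have : (deg G' v : ℝ) ≤ (deg G v : ℝ) + 1 := by exact_mod_cast h2
      linarith

lemma edgeCount_le_edgeCount (h : Wit G G' i) : edgeCount G ≤ edgeCount G' + n := by
  rw [edgeCount_eq, edgeCount_eq]
  have hsub : G.edgeFinset ⊆ G'.edgeFinset ∪ Finset.univ.image (fun u => s(i, u)) := by
    intro e he
    induction e with
    | h u v =>
      rw [SimpleGraph.mem_edgeFinset, SimpleGraph.mem_edgeSet] at he
      by_cases h' : G'.Adj u v
      · apply Finset.mem_union_left
        rw [SimpleGraph.mem_edgeFinset, SimpleGraph.mem_edgeSet]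
        exact h'
      · apply Finset.mem_union_right _
        rcases h u v (fun hiff => h' (hiff.mp he)) with h1 | h1
        · subst h1; exact Finset.mem_image.mpr ⟨v, Finset.mem_univ _, rfl⟩
        · subst h1
          refine Finset.mem_image.mpr ⟨u, Finset.mem_univ _, ?_⟩
          exact (Sym2.eq_swap)
  calc G.edgeFinset.card ≤ _ := Finset.card_le_card hsub
    _ ≤ G'.edgeFinset.card + (Finset.univ.image (fun u => s(i, u))).card :=
        Finset.card_union_le _ _
    _ ≤ G'.edgeFinset.card + n := by
        have := Finset.card_image_le (s := (Finset.univ : Finset (Fin n)))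
          (f := fun u => s(i, u))
        simp only [Finset.card_univ, Fintype.card_fin] at this
        omega

lemma edgeCount_diff (h : Wit G G' i) :
    |(edgeCount G : ℝ) - (edgeCount G' : ℝ)| ≤ n := by
  have h1 := edgeCount_le_edgeCount h
  have h2 := edgeCount_le_edgeCount h.symm
  rw [abs_sub_le_iff]
  constructor <;>
    · push_cast
      have : (edgeCount G : ℝ) ≤ (edgeCount G' : ℝ) + n := by exact_mod_cast h1
      have : (edgeCount G' : ℝ) ≤ (edgeCount G : ℝ) + n := by exact_mod_cast h2
      linarith

lemma avgDeg_diff (hn : 2 ≤ n) (h : Wit G G' i) : |avgDeg G - avgDeg G'| ≤ 2 := by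
  have hE := edgeCount_diff h
  have hn0 : (0:ℝ) < n := by positivity
  rw [avgDeg, avgDeg]
  have : 2 * (edgeCount G : ℝ) / n - 2 * (edgeCount G' : ℝ) / n
      = 2 * ((edgeCount G : ℝ) - edgeCount G') / n := by ring
  rw [this, abs_div, abs_of_pos hn0]
  rw [div_le_iff₀ hn0, abs_mul]
  have : |(2:ℝ)| = 2 := by norm_num
  rw [this]
  nlinarith [abs_nonneg ((edgeCount G : ℝ) - edgeCount G')]

lemma edgeDensity_diff (hn : 2 ≤ n) (h : Wit G G' i) :
    |edgeDensity G - edgeDensity G'| ≤ 2 / ((n:ℝ) - 1) := by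
  have hE := edgeCount_diff h
  have hn1 : (1:ℝ) ≤ (n:ℝ) - 1 := by
    have : (2:ℝ) ≤ n := by exact_mod_cast hn
    linarith
  have hn0 : (0:ℝ) < n := by positivity
  have hch : (n.choose 2 : ℝ) = n * ((n:ℝ) - 1) / 2 := choose_cast hn
  have hchpos : (0:ℝ) < (n.choose 2 : ℝ) := by rw [hch]; nlinarith
  rw [edgeDensity, edgeDensity, div_sub_div_same, abs_div, abs_of_pos hchpos]
  rw [div_le_div_iff₀ hchpos (by linarith : (0:ℝ) < (n:ℝ) - 1)]
  rw [hch]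
  nlinarith [abs_nonneg ((edgeCount G : ℝ) - edgeCount G')]

lemma kOf_le_kOf (hn : 2 ≤ n) (h : Wit G G' i) (kstar : ℝ) :
    kOf G' kstar ≤ kOf G kstar + 2 := by
  apply Nat.sInf_le
  constructor
  · omega
  · -- farCount G' kstar (k+2) ≤ k+2
    rw [farCount_eq]
    have hkk := (kOf_mem hn G kstar).2
    rw [farCount_eq] at hkk
    have hsub : (Finset.univ.filter
        (fun v => kstar + 3 * ((kOf G kstar + 2 : ℕ) : ℝ) < |(deg G' v : ℝ) - avgDeg G'|))
        ⊆ insert i (Finset.univ.filter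
          (fun v => kstar + 3 * ((kOf G kstar : ℕ) : ℝ) < |(deg G v : ℝ) - avgDeg G|)) := by
      intro v hv
      simp only [Finset.mem_filter, Finset.mem_univ, true_and] at hv
      by_cases hvi : v = i
      · simp [hvi]
      · rw [Finset.mem_insert]
        right
        simp only [Finset.mem_filter, Finset.mem_univ, true_and]
        have hd := deg_diff_le h.symm hvi
        have ha := avgDeg_diff hn h
        have htri : |(deg G' v : ℝ) - avgDeg G'| ≤ |(deg G v : ℝ) - avgDeg G| + 3 := by
          have : (deg G' v : ℝ) - avgDeg G'
              = ((deg G v : ℝ) - avgDeg G) + ((deg G' v : ℝ) - deg G v)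
                + (avgDeg G - avgDeg G') := by ring
          rw [this]
          calc _ ≤ |(deg G v : ℝ) - avgDeg G| + |(deg G' v : ℝ) - deg G v|
                + |avgDeg G - avgDeg G'| := by
                  exact (abs_add_three _ _ _)
            _ ≤ _ := by
                have h3 : |(deg G' v : ℝ) - deg G v| ≤ 1 := hd
                linarith
        push_cast at hv ⊢
        linarith
    calc _ ≤ (insert i (Finset.univ.filter
          (fun v => kstar + 3 * ((kOf G kstar : ℕ) : ℝ) < |(deg G v : ℝ) - avgDeg G|))).card :=
          Finset.card_le_card hsub
      _ ≤ _ + 1 := Finset.card_insert_le _ _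
      _ ≤ kOf G kstar + 2 := by omega

/-- Lipschitz helper for `max 0`. -/
lemma max_zero_half (a : ℝ) : max 0 a = (a + |a|) / 2 := by
  rcases abs_cases a with ⟨h1, h2⟩ | ⟨h1, h2⟩
  · rw [h1, max_eq_right h2]; ring
  · rw [h1, max_eq_left (by linarith)]; ring

lemma max_zero_lip (a b : ℝ) : |max 0 a - max 0 b| ≤ |a - b| := by
  rw [max_zero_half, max_zero_half]
  have h1 : (a + |a|) / 2 - (b + |b|) / 2 = ((a - b) + (|a| - |b|)) / 2 := by ring
  rw [h1]
  have h2 : abs (|a| - |b|) ≤ |a - b| := abs_abs_sub_abs_le_abs_sub a b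
  calc |((a - b) + (|a| - |b|)) / 2| = |(a - b) + (|a| - |b|)| / 2 := by
        rw [abs_div]; norm_num
    _ ≤ (|a - b| + abs (|a| - |b|)) / 2 := by
        have := abs_add_le (a - b) (|a| - |b|); linarith
    _ ≤ |a - b| := by linarith

lemma tDist_diff (hn : 2 ≤ n) (h : Wit G G' i) (kstar : ℝ) {v : Fin n} (hv : v ≠ i) :
    |tDist G kstar v - tDist G' kstar v| ≤ 9 := by
  rw [tDist, tDist]
  refine le_trans (max_zero_lip _ _) ?_
  have h1 : abs (|(deg G v : ℝ) - avgDeg G| - |(deg G' v : ℝ) - avgDeg G'|)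
      ≤ |((deg G v : ℝ) - avgDeg G) - ((deg G' v : ℝ) - avgDeg G')| :=
    abs_abs_sub_abs_le_abs_sub _ _
  have h2 : |((deg G v : ℝ) - avgDeg G) - ((deg G' v : ℝ) - avgDeg G')| ≤ 3 := by
    have hd := deg_diff_le h hv
    have ha := avgDeg_diff hn h
    have : ((deg G v : ℝ) - avgDeg G) - ((deg G' v : ℝ) - avgDeg G')
        = ((deg G v : ℝ) - deg G' v) - (avgDeg G - avgDeg G') := by ring
    rw [this]
    calc _ ≤ |(deg G v : ℝ) - deg G' v| + |avgDeg G - avgDeg G'| := abs_sub _ _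
      _ ≤ 3 := by linarith
  have h3 : |3 * ((kOf G kstar : ℝ)) - 3 * ((kOf G' kstar : ℝ))| ≤ 6 := by
    have ha := kOf_le_kOf hn h kstar
    have hb := kOf_le_kOf hn h.symm kstar
    have ha' : (kOf G' kstar : ℝ) ≤ (kOf G kstar : ℝ) + 2 := by exact_mod_cast ha
    have hb' : (kOf G kstar : ℝ) ≤ (kOf G' kstar : ℝ) + 2 := by exact_mod_cast hb
    rw [abs_le]; constructor <;> linarith
  calc |(|(deg G v : ℝ) - avgDeg G| - (kstar + 3 * (kOf G kstar : ℝ)))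
        - (|(deg G' v : ℝ) - avgDeg G'| - (kstar + 3 * (kOf G' kstar : ℝ)))|
      = |(|(deg G v : ℝ) - avgDeg G| - |(deg G' v : ℝ) - avgDeg G'|)
        - (3 * ((kOf G kstar : ℝ)) - 3 * ((kOf G' kstar : ℝ)))| := by congr 1; ring
    _ ≤ abs (|(deg G v : ℝ) - avgDeg G| - |(deg G' v : ℝ) - avgDeg G'|)
        + |3 * ((kOf G kstar : ℝ)) - 3 * ((kOf G' kstar : ℝ))| := abs_sub _ _
    _ ≤ 9 := by linarith

lemma wt_diff (hn : 2 ≤ n) (h : Wit G G' i) (kstar : ℝ) {β : ℝ} (hβ : 0 < β)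
    {v : Fin n} (hv : v ≠ i) :
    |wt G kstar β v - wt G' kstar β v| ≤ 9 * β := by
  rw [wt, wt]
  refine le_trans (max_zero_lip _ _) ?_
  have : (1 - β * tDist G kstar v) - (1 - β * tDist G' kstar v)
      = -(β * (tDist G kstar v - tDist G' kstar v)) := by ring
  rw [this, abs_neg, abs_mul, abs_of_pos hβ]
  have := tDist_diff hn h kstar hv
  nlinarith

end Compare

section RowI

variable {n : ℕ}

/-- The row sum at the special vertex is close to the average degree. -/
lemma row_i_bound (hn : 2 ≤ n) {β : ℝ} (hβ : 0 < β) (G : SimpleGraph (Fin n)) (kstar : ℝ)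
    (hks : 0 ≤ kstar) (i : Fin n) :
    |(∑ u ∈ Finset.univ.erase i, valPair G kstar β i u) - avgDeg G|
      ≤ (kOf G kstar : ℝ) + (kstar + 3 * (kOf G kstar : ℝ) + 1 / β) := by
  set w := wt G kstar β with hw
  set p := edgeDensity G with hp
  set k := (kOf G kstar : ℝ) with hk
  -- the comparison function g
  set g : Fin n → ℝ := fun u =>
    w i * (if G.Adj i u then 1 else 0) + (1 - w i) * p with hg
  have hstep1 : |(∑ u ∈ Finset.univ.erase i, valPair G kstar β i u)
      - (∑ u ∈ Finset.univ.erase i, g u)| ≤ k := by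
    rw [← Finset.sum_sub_distrib]
    refine le_trans (Finset.abs_sum_le_sum_abs _ _) ?_
    have hb : ∀ u ∈ Finset.univ.erase i, |valPair G kstar β i u - g u|
        ≤ (if w u < 1 then (1:ℝ) else 0) := by
      intro u _
      have hdiff : valPair G kstar β i u - g u
          = (min (w i) (w u) - w i) * ((if G.Adj i u then 1 else 0) - p) := by
        rw [valPair, hg]; ring
      by_cases hu : w u < 1
      · rw [if_pos hu, hdiff, abs_mul]
        have h1 : |min (w i) (w u) - w i| ≤ 1 := by
          have := wt_nonneg G kstar β i
          have := wt_nonneg G kstar β u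
          have := wt_le_one hβ G kstar i
          have h4 : min (w i) (w u) ≤ w i := min_le_left _ _
          have h5 : 0 ≤ min (w i) (w u) := le_min (by assumption) (by assumption)
          rw [abs_le]; constructor <;> simp only [← hw] at * <;> linarith
        have h2 : |(if G.Adj i u then (1:ℝ) else 0) - p| ≤ 1 := by
          have := edgeDensity_nonneg G
          have := edgeDensity_le_one hn G
          rw [abs_le]; constructor <;> split <;> simp only [← hp] at * <;> linarith
        nlinarith [abs_nonneg (min (w i) (w u) - w i),
          abs_nonneg ((if G.Adj i u then (1:ℝ) else 0) - p)]
      · rw [if_neg hu, hdiff]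
        have hu1 : w u = 1 := le_antisymm (wt_le_one hβ G kstar u) (by linarith [not_lt.mp hu])
        have : min (w i) (w u) = w i := by
          rw [hu1]; exact min_eq_left (wt_le_one hβ G kstar i)
        rw [this]; simp
    refine le_trans (Finset.sum_le_sum hb) ?_
    have : ∑ u ∈ Finset.univ.erase i, (if w u < 1 then (1:ℝ) else 0)
        ≤ ∑ u ∈ Finset.univ, (if w u < 1 then (1:ℝ) else 0) := by
      apply Finset.sum_le_sum_of_subset_of_nonneg (Finset.erase_subset _ _)
      intro u _ _; split <;> norm_num
    refine le_trans this ?_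
    rw [Finset.sum_boole]
    have := badF_card_le hn hβ G kstar (β := β)
    rw [hk]
    exact_mod_cast this
  -- evaluate the sum of g
  have hcard : (Finset.univ.erase i).card = n - 1 := by
    rw [Finset.card_erase_of_mem (Finset.mem_univ _)]; simp
  have hsum_g : (∑ u ∈ Finset.univ.erase i, g u)
      = w i * ((deg G i : ℝ) - avgDeg G) + avgDeg G := by
    rw [hg]
    rw [Finset.sum_add_distrib, ← Finset.mul_sum, sum_indicator, Finset.sum_const, hcard]
    have hpn : p * ((n:ℝ) - 1) = avgDeg G := density_mul hn G
    have hcast : ((n - 1 : ℕ) : ℝ) = (n : ℝ) - 1 := by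
      have : 1 ≤ n := by omega
      push_cast [this]; ring
    rw [nsmul_eq_mul, hcast]
    have hx : ((n:ℝ) - 1) * ((1 - w i) * p) = (1 - w i) * avgDeg G := by
      rw [← hpn]; ring
    linarith [hx]
  -- bound w i * (deg - avg)
  have hterm : |w i * ((deg G i : ℝ) - avgDeg G)| ≤ kstar + 3 * k + 1 / β := by
    have h0 : (0:ℝ) ≤ w i := wt_nonneg G kstar β i
    have hle1 : w i ≤ 1 := wt_le_one hβ G kstar i
    have hk0 : (0:ℝ) ≤ k := by rw [hk]; positivity
    rcases eq_or_lt_of_le h0 with h0' | h0'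
    · rw [← h0', zero_mul, abs_zero]
      positivity
    · have h0'' : 0 < wt G kstar β i := h0'
      have hclose : |(deg G i : ℝ) - avgDeg G| ≤ kstar + 3 * k + 1 / β :=
        deg_close_of_wt_pos hβ G kstar h0''
      have habs : |w i| = w i := abs_of_pos h0'
      rw [abs_mul, habs]
      nlinarith [abs_nonneg ((deg G i : ℝ) - avgDeg G)]
  calc |(∑ u ∈ Finset.univ.erase i, valPair G kstar β i u) - avgDeg G|
      = |((∑ u ∈ Finset.univ.erase i, valPair G kstar β i u)
          - (∑ u ∈ Finset.univ.erase i, g u))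
        + (w i * ((deg G i : ℝ) - avgDeg G))| := by
        rw [hsum_g]; congr 1; ring
    _ ≤ |(∑ u ∈ Finset.univ.erase i, valPair G kstar β i u)
          - (∑ u ∈ Finset.univ.erase i, g u)|
        + |w i * ((deg G i : ℝ) - avgDeg G)| := abs_add_le _ _
    _ ≤ _ := by linarith

end RowI

section RowV

variable {n : ℕ} {G G' : SimpleGraph (Fin n)} {i : Fin n}

lemma bad_union_card (hn : 2 ≤ n) {β : ℝ} (hβ : 0 < β) (G G' : SimpleGraph (Fin n)) (kstar : ℝ) :
    (Finset.univ.filter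
      (fun u : Fin n => wt G kstar β u < 1 ∨ wt G' kstar β u < 1)).card
      ≤ kOf G kstar + kOf G' kstar := by
  rw [Finset.filter_or]
  calc _ ≤ (Finset.univ.filter (fun u : Fin n => wt G kstar β u < 1)).card
      + (Finset.univ.filter (fun u : Fin n => wt G' kstar β u < 1)).card :=
      Finset.card_union_le _ _
    _ ≤ _ := Nat.add_le_add (badF_card_le hn hβ G kstar) (badF_card_le hn hβ G' kstar)

lemma val_diff_bound (hn : 2 ≤ n) {β : ℝ} (hβ : 0 < β) (G G' : SimpleGraph (Fin n))
    (kstar : ℝ) (u v : Fin n) :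
    |valPair G kstar β u v - valPair G' kstar β u v| ≤ 2 := by
  have h1 := valPair_mem hn hβ G kstar u v
  have h2 := valPair_mem hn hβ G' kstar u v
  rw [Set.mem_Icc] at h1 h2
  rw [abs_le]; constructor <;> linarith [h1.1, h1.2, h2.1, h2.2]

set_option maxHeartbeats 1000000 in
/-- Main row bound for a vertex `v ≠ i`. -/
lemma row_v_bound (hn : 2 ≤ n) (h : Wit G G' i) (kstar : ℝ) (hks : 0 ≤ kstar)
    {β : ℝ} (hβ : 0 < β) {v : Fin n} (hv : v ≠ i) :
    |∑ u ∈ Finset.univ.erase v, (valPair G kstar β v u - valPair G' kstar β v u)|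
      ≤ 9 * β * (kstar + 7 * (kOf G kstar : ℝ) + 14) + 13 := by
  set w := wt G kstar β with hw
  set w' := wt G' kstar β with hw'
  set p := edgeDensity G with hp
  set p' := edgeDensity G' with hp'
  set k := (kOf G kstar : ℝ) with hk
  set k' := (kOf G' kstar : ℝ) with hk'
  have hk2 : k' ≤ k + 2 := by
    rw [hk, hk']; exact_mod_cast kOf_le_kOf hn h kstar
  have hk1 : (1:ℝ) ≤ k := by
    rw [hk]; exact_mod_cast (kOf_mem hn G kstar).1
  have hn1 : (1:ℝ) ≤ (n:ℝ) - 1 := by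
    have : (2:ℝ) ≤ n := by exact_mod_cast hn
    linarith
  set Δ : Fin n → ℝ := fun u => valPair G kstar β v u - valPair G' kstar β v u with hΔ
  have hiv : i ∈ Finset.univ.erase v := Finset.mem_erase.mpr ⟨Ne.symm hv, Finset.mem_univ _⟩
  have hsplit : ∑ u ∈ Finset.univ.erase v, Δ u
      = Δ i + ∑ u ∈ (Finset.univ.erase v).erase i, Δ u :=
    (Finset.add_sum_erase _ Δ hiv).symm
  set E2 := (Finset.univ.erase v).erase i with hE2
  have hΔi : |Δ i| ≤ 2 := val_diff_bound hn hβ G G' kstar v i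
  set x : Fin n → ℝ := fun u => if G.Adj v u then 1 else 0 with hx
  set m : Fin n → ℝ := fun u => min (w v) (w u) with hm
  set m' : Fin n → ℝ := fun u => min (w' v) (w' u) with hm'
  have hdecomp : ∀ u ∈ E2, Δ u = (m u - m' u) * (x u - p) + (1 - m' u) * (p - p') := by
    intro u hu
    rw [hE2, Finset.mem_erase, Finset.mem_erase] at hu
    have hui : u ≠ i := hu.1
    have hadj : G.Adj v u ↔ G'.Adj v u := adj_eq_of_ne h hv hui
    simp only [hΔ, hm, hm', hx, hw, hw', hp, hp', valPair]
    by_cases hA : G.Adj v u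
    · rw [if_pos hA, if_pos (hadj.mp hA)]; ring
    · rw [if_neg hA, if_neg (fun hA' => hA (hadj.mpr hA'))]; ring
  have hsum2 : ∑ u ∈ E2, Δ u
      = (∑ u ∈ E2, (m u - m' u) * (x u - p)) + ∑ u ∈ E2, (1 - m' u) * (p - p') := by
    rw [← Finset.sum_add_distrib]
    exact Finset.sum_congr rfl hdecomp
  have hpd : |p - p'| ≤ 2 / ((n:ℝ) - 1) := edgeDensity_diff hn h
  have hcardE2 : ((E2.card : ℝ)) ≤ (n:ℝ) - 1 := by
    have h1 : E2.card ≤ (Finset.univ.erase v).card := Finset.card_le_card (Finset.erase_subset _ _)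
    have h2 : (Finset.univ.erase v).card = n - 1 := by
      rw [Finset.card_erase_of_mem (Finset.mem_univ _)]; simp
    have h3 : E2.card ≤ n - 1 := h2 ▸ h1
    have h4 : ((n - 1 : ℕ):ℝ) = (n:ℝ) - 1 := by
      have : 1 ≤ n := by omega
      push_cast [this]; ring
    rw [← h4]; exact_mod_cast h3
  have hdens : |∑ u ∈ E2, (1 - m' u) * (p - p')| ≤ 2 := by
    refine le_trans (Finset.abs_sum_le_sum_abs _ _) ?_
    have hterm : ∀ u ∈ E2, |(1 - m' u) * (p - p')| ≤ 2 / ((n:ℝ) - 1) := by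
      intro u _
      rw [abs_mul]
      have hm0 : (0:ℝ) ≤ m' u := le_min (wt_nonneg _ _ _ _) (wt_nonneg _ _ _ _)
      have hm1 : m' u ≤ 1 := le_trans (min_le_left _ _) (wt_le_one hβ _ _ _)
      have h1 : |1 - m' u| ≤ 1 := by rw [abs_le]; constructor <;> linarith
      nlinarith [abs_nonneg (p - p'), abs_nonneg (1 - m' u)]
    refine le_trans (Finset.sum_le_sum hterm) ?_
    rw [Finset.sum_const, nsmul_eq_mul]
    have hq : (0:ℝ) ≤ 2 / ((n:ℝ) - 1) := by positivity
    have : ((n:ℝ) - 1) * (2 / ((n:ℝ) - 1)) = 2 := by field_simp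
    nlinarith
  set Bset : Finset (Fin n) := Finset.univ.filter
    (fun u : Fin n => wt G kstar β u < 1 ∨ wt G' kstar β u < 1) with hBset
  have hBcard : ((Bset.card : ℝ)) ≤ k + k' := by
    rw [hk, hk']
    exact_mod_cast bad_union_card hn hβ G G' kstar
  set S1 := ∑ u ∈ E2.filter (· ∈ Bset), (m u - m' u) * (x u - p) with hS1
  set G2 := E2.filter (· ∉ Bset) with hG2
  have hmain : ∑ u ∈ E2, (m u - m' u) * (x u - p)
      = S1 + ∑ u ∈ G2, (m u - m' u) * (x u - p) :=
    (Finset.sum_filter_add_sum_filter_not _ _ _).symm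
  have hxp : ∀ u, |x u - p| ≤ 1 := by
    intro u
    have h1 := edgeDensity_nonneg G
    have h2 := edgeDensity_le_one hn G
    rw [← hp] at h1 h2
    rw [hx]; simp only []
    rw [abs_le]; constructor <;> split <;> linarith
  have hwv : |w v - w' v| ≤ 9 * β := wt_diff hn h kstar hβ hv
  have hbad : |S1| ≤ ((E2.filter (· ∈ Bset)).card : ℝ) * (9 * β) := by
    rw [hS1]
    refine le_trans (Finset.abs_sum_le_sum_abs _ _) ?_
    have hterm : ∀ u ∈ E2.filter (· ∈ Bset), |(m u - m' u) * (x u - p)| ≤ 9 * β := by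
      intro u hu
      rw [Finset.mem_filter] at hu
      have hui : u ≠ i := (Finset.mem_erase.mp hu.1).1
      have hwu : |w u - w' u| ≤ 9 * β := wt_diff hn h kstar hβ hui
      have hmm : |m u - m' u| ≤ 9 * β := by
        refine le_trans (abs_min_sub_min_le_max _ _ _ _) ?_
        exact max_le hwv hwu
      rw [abs_mul]
      nlinarith [abs_nonneg (m u - m' u), abs_nonneg (x u - p), hxp u]
    refine le_trans (Finset.sum_le_sum hterm) ?_
    rw [Finset.sum_const, nsmul_eq_mul]
  have hbadcard : ((E2.filter (· ∈ Bset)).card : ℝ) ≤ k + k' := by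
    refine le_trans ?_ hBcard
    have hss : (E2.filter (· ∈ Bset)) ⊆ Bset := fun u hu => (Finset.mem_filter.mp hu).2
    exact_mod_cast Finset.card_le_card hss
  have hbad' : |S1| ≤ (k + k') * (9 * β) := by
    refine le_trans hbad ?_
    have h9 : (0:ℝ) ≤ 9 * β := by positivity
    nlinarith [hbadcard]
  have hgood_eq : ∑ u ∈ G2, (m u - m' u) * (x u - p)
      = (w v - w' v) * ∑ u ∈ G2, (x u - p) := by
    rw [Finset.mul_sum]
    refine Finset.sum_congr rfl ?_
    intro u hu
    rw [hG2, Finset.mem_filter] at hu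
    have hnb := hu.2
    rw [hBset, Finset.mem_filter] at hnb
    push_neg at hnb
    have hnb' := hnb (Finset.mem_univ u)
    have hu1 : w u = 1 := le_antisymm (wt_le_one hβ _ _ _) hnb'.1
    have hu1' : w' u = 1 := le_antisymm (wt_le_one hβ _ _ _) hnb'.2
    rw [hm, hm']; simp only []
    rw [hu1, hu1', min_eq_left (wt_le_one hβ _ _ _), min_eq_left (wt_le_one hβ _ _ _)]
  have hG2sub : G2 ⊆ Finset.univ.erase v := by
    intro u hu
    exact Finset.erase_subset _ _ (Finset.mem_filter.mp hu).1
  have hxsum : ∑ u ∈ Finset.univ.erase v, (x u - p) = (deg G v : ℝ) - avgDeg G := by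
    rw [Finset.sum_sub_distrib]
    rw [hx]; simp only []
    rw [sum_indicator, Finset.sum_const, nsmul_eq_mul]
    have hcard : (Finset.univ.erase v).card = n - 1 := by
      rw [Finset.card_erase_of_mem (Finset.mem_univ _)]; simp
    rw [hcard]
    have h4 : ((n - 1 : ℕ):ℝ) = (n:ℝ) - 1 := by
      have : 1 ≤ n := by omega
      push_cast [this]; ring
    rw [h4]
    have hdm := density_mul hn G
    rw [← hp] at hdm
    linarith [hdm]
  have hsdiffcard : (((Finset.univ.erase v) \ G2).card : ℝ) ≤ 1 + (k + k') := by
    have hsub : (Finset.univ.erase v) \ G2 ⊆ insert i Bset := by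
      intro u hu
      rw [Finset.mem_sdiff] at hu
      by_cases hui : u = i
      · simp [hui]
      · rw [Finset.mem_insert]
        right
        have huE2 : u ∈ E2 := Finset.mem_erase.mpr ⟨hui, hu.1⟩
        by_contra hB
        exact hu.2 (Finset.mem_filter.mpr ⟨huE2, hB⟩)
    have h1 : ((Finset.univ.erase v) \ G2).card ≤ Bset.card + 1 := by
      calc _ ≤ (insert i Bset).card := Finset.card_le_card hsub
        _ ≤ _ := Finset.card_insert_le _ _
    calc (((Finset.univ.erase v) \ G2).card : ℝ) ≤ (Bset.card : ℝ) + 1 := by exact_mod_cast h1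
      _ ≤ 1 + (k + k') := by linarith
  have hG2sum : |∑ u ∈ G2, (x u - p)| ≤ |(deg G v : ℝ) - avgDeg G| + (1 + (k + k')) := by
    have hsd : ∑ u ∈ (Finset.univ.erase v) \ G2, (x u - p) + ∑ u ∈ G2, (x u - p)
        = ∑ u ∈ Finset.univ.erase v, (x u - p) := Finset.sum_sdiff hG2sub
    have h5 : |∑ u ∈ (Finset.univ.erase v) \ G2, (x u - p)| ≤ 1 + (k + k') := by
      refine le_trans (Finset.abs_sum_le_sum_abs _ _) ?_
      refine le_trans (Finset.sum_le_sum (fun u _ => hxp u)) ?_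
      rw [Finset.sum_const, nsmul_eq_mul, mul_one]
      exact hsdiffcard
    have heq2 : ∑ u ∈ G2, (x u - p)
        = ((deg G v : ℝ) - avgDeg G) - ∑ u ∈ (Finset.univ.erase v) \ G2, (x u - p) := by
      rw [← hxsum]; linarith [hsd]
    rw [heq2]
    calc _ ≤ |(deg G v : ℝ) - avgDeg G| + |∑ u ∈ (Finset.univ.erase v) \ G2, (x u - p)| :=
        abs_sub _ _
      _ ≤ _ := by linarith
  have hgood : |(w v - w' v) * ∑ u ∈ G2, (x u - p)|
      ≤ 9 * β * ((kstar + 3 * k + 1 / β + 9) + (1 + (k + k'))) := by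
    by_cases hww : w v = w' v
    · rw [hww, sub_self, zero_mul, abs_zero]
      have : (0:ℝ) ≤ 1/β := by positivity
      nlinarith [hk1, hk2, hks, hβ.le]
    · have hdeg : |(deg G v : ℝ) - avgDeg G| ≤ kstar + 3 * k + 1 / β + 9 := by
        by_cases h0 : 0 < w v
        · have hcl := deg_close_of_wt_pos hβ G kstar (v := v) h0
          rw [← hk] at hcl
          linarith
        · have hw0 : w v = 0 := le_antisymm (not_lt.mp h0) (wt_nonneg _ _ _ _)
          have hnn : (0:ℝ) ≤ w' v := wt_nonneg G' kstar β v
          rcases eq_or_lt_of_le hnn with he | he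
          · exact absurd (by rw [hw0, ← he]) hww
          · have hc' := deg_close_of_wt_pos hβ G' kstar (v := v) he
            rw [← hk'] at hc'
            have hd := deg_diff_le h hv
            have ha := avgDeg_diff hn h
            have htri : |(deg G v : ℝ) - avgDeg G| ≤ |(deg G' v : ℝ) - avgDeg G'| + 3 := by
              have heq : (deg G v : ℝ) - avgDeg G
                  = ((deg G' v : ℝ) - avgDeg G') + ((deg G v : ℝ) - deg G' v)
                    + (avgDeg G' - avgDeg G) := by ring
              rw [heq]
              calc _ ≤ |(deg G' v : ℝ) - avgDeg G'| + |(deg G v : ℝ) - deg G' v|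
                    + |avgDeg G' - avgDeg G| := abs_add_three _ _ _
                _ ≤ _ := by
                    rw [abs_sub_comm (avgDeg G') (avgDeg G)]
                    linarith
            linarith
      rw [abs_mul]
      have h9 : (0:ℝ) ≤ 9 * β := by positivity
      have hq : |∑ u ∈ G2, (x u - p)| ≤ (kstar + 3 * k + 1 / β + 9) + (1 + (k + k')) := by
        linarith [hG2sum]
      nlinarith [abs_nonneg (w v - w' v), abs_nonneg (∑ u ∈ G2, (x u - p)),
        mul_le_mul hwv hq (abs_nonneg _) h9]
  -- assemble
  set Sg := (w v - w' v) * ∑ u ∈ G2, (x u - p) with hSg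
  set S3 := ∑ u ∈ E2, (1 - m' u) * (p - p') with hS3
  have heqall : ∑ u ∈ Finset.univ.erase v, Δ u = Δ i + (S1 + Sg) + S3 := by
    rw [hsplit, hsum2, hmain, hgood_eq]; ring
  rw [heqall]
  have t1 : |Δ i + (S1 + Sg) + S3| ≤ |Δ i| + |S1| + |Sg| + |S3| := by
    calc |Δ i + (S1 + Sg) + S3| ≤ |Δ i + (S1 + Sg)| + |S3| := abs_add_le _ _
      _ ≤ (|Δ i| + |S1 + Sg|) + |S3| := by linarith [abs_add_le (Δ i) (S1 + Sg)]
      _ ≤ _ := by linarith [abs_add_le S1 Sg]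
  have hβ1 : β * (1 / β) = 1 := by field_simp
  have hb9 : 9 * β * ((kstar + 3 * k + 1 / β + 9) + (1 + (k + k')))
      ≤ 9 * β * (kstar + 3 * k + 10 + (k + k')) + 9 := by nlinarith [hβ1]
  have hkk : 9 * β * (kstar + 3 * k + 10 + (k + k')) + (k + k') * (9 * β)
      ≤ 9 * β * (kstar + 7 * k + 14) := by nlinarith [hk2, hβ.le, hk1]
  linarith [t1, hΔi, hbad', hgood, hdens]

end RowV

section Assemble

variable {n : ℕ} {G G' : SimpleGraph (Fin n)} {i : Fin n}

/-- Fine bound on the value difference for pairs away from `i`. -/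
lemma val_diff_fine (hn : 2 ≤ n) (h : Wit G G' i) (kstar : ℝ) {β : ℝ} (hβ : 0 < β)
    {a b : Fin n} (ha : a ≠ i) (hb : b ≠ i) :
    |valPair G kstar β a b - valPair G' kstar β a b|
      ≤ 9 * β + |edgeDensity G - edgeDensity G'| := by
  have hadj : G.Adj a b ↔ G'.Adj a b := adj_eq_of_ne h ha hb
  set x : ℝ := if G.Adj a b then 1 else 0 with hx
  set m : ℝ := min (wt G kstar β a) (wt G kstar β b) with hm
  set m' : ℝ := min (wt G' kstar β a) (wt G' kstar β b) with hm'
  set p := edgeDensity G with hp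
  set p' := edgeDensity G' with hp'
  have hdec : valPair G kstar β a b - valPair G' kstar β a b
      = (m - m') * (x - p) + (1 - m') * (p - p') := by
    rw [valPair, valPair, ← hm, ← hm', ← hp, ← hp']
    by_cases hA : G.Adj a b
    · rw [hx, if_pos hA, if_pos (hadj.mp hA)]; ring
    · rw [hx, if_neg hA, if_neg (fun hA' => hA (hadj.mpr hA'))]; ring
  have hmm : |m - m'| ≤ 9 * β := by
    refine le_trans (abs_min_sub_min_le_max _ _ _ _) ?_
    exact max_le (wt_diff hn h kstar hβ ha) (wt_diff hn h kstar hβ hb)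
  have hxp : |x - p| ≤ 1 := by
    have h1 := edgeDensity_nonneg G
    have h2 := edgeDensity_le_one hn G
    rw [← hp] at h1 h2
    rw [hx, abs_le]; constructor <;> split <;> linarith
  have hm0 : (0:ℝ) ≤ m' := le_min (wt_nonneg _ _ _ _) (wt_nonneg _ _ _ _)
  have hm1 : m' ≤ 1 := le_trans (min_le_left _ _) (wt_le_one hβ _ _ _)
  have h1m : |1 - m'| ≤ 1 := by rw [abs_le]; constructor <;> linarith
  rw [hdec]
  calc |(m - m') * (x - p) + (1 - m') * (p - p')|
      ≤ |(m - m') * (x - p)| + |(1 - m') * (p - p')| := abs_add_le _ _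
    _ ≤ 9 * β + |p - p'| := by
        rw [abs_mul, abs_mul]
        have e1 : |m - m'| * |x - p| ≤ 9 * β := by
          nlinarith [abs_nonneg (m - m'), abs_nonneg (x - p), hβ.le]
        have e2 : |1 - m'| * |p - p'| ≤ |p - p'| := by
          nlinarith [abs_nonneg (1 - m'), abs_nonneg (p - p')]
        linarith
    _ ≤ _ := le_refl _

end Assemble

set_option maxHeartbeats 2000000 in
/-- the local sensitivity bound
`|f(G) - f(G')| ≤ C·((k_G + k*)(1 + β k_G) + 1/β)` for node-adjacent graphs. -/
theorem local_sensitivity_bound :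
    ∃ C : ℝ, 0 < C ∧
      ∀ n : ℕ, 2 ≤ n → ∀ kstar : ℝ, 0 ≤ kstar → ∀ β : ℝ, 0 < β → β ≤ 1 →
        ∀ G G' : SimpleGraph (Fin n), NodeAdjacent G G' →
          |fEst G kstar β - fEst G' kstar β| ≤
            C * (((kOf G kstar : ℝ) + kstar) * (1 + β * (kOf G kstar : ℝ)) + 1 / β) := by
  refine ⟨10000, by norm_num, ?_⟩
  intro n hn kstar hks β hβ hβ1 G G' hGG'
  obtain ⟨i, h⟩ := hGG'
  have h : Wit G G' i := h
  set k := (kOf G kstar : ℝ) with hk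
  set k' := (kOf G' kstar : ℝ) with hk'
  have hk2 : k' ≤ k + 2 := by rw [hk, hk']; exact_mod_cast kOf_le_kOf hn h kstar
  have hk1 : (1:ℝ) ≤ k := by rw [hk]; exact_mod_cast (kOf_mem hn G kstar).1
  have hk0' : (0:ℝ) ≤ k' := by rw [hk']; positivity
  have hn1 : (1:ℝ) ≤ (n:ℝ) - 1 := by
    have : (2:ℝ) ≤ n := by exact_mod_cast hn
    linarith
  set Δ : Fin n → Fin n → ℝ :=
    fun a b => valPair G kstar β a b - valPair G' kstar β a b with hΔ
  have hΔsym : ∀ a b, Δ a b = Δ b a := by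
    intro a b
    rw [hΔ]; simp only []
    rw [valPair_comm, valPair_comm G']
  set P : Fin n → ℝ := fun a => ∑ b ∈ Finset.univ.erase a, Δ a b with hP
  -- f difference as a row sum
  have hfe : ∀ H : SimpleGraph (Fin n), fEst H kstar β
      = (∑ a, ∑ b ∈ Finset.univ.erase a, valPair H kstar β a b) / 2 := by
    intro H
    rw [fEst]
    congr 1
    refine Finset.sum_congr rfl fun a _ => ?_
    rw [← Finset.sum_filter, Finset.filter_ne]
  have hdiff : fEst G kstar β - fEst G' kstar β = (∑ a, P a) / 2 := by
    rw [hfe G, hfe G', div_sub_div_same]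
    congr 1
    rw [← Finset.sum_sub_distrib]
    refine Finset.sum_congr rfl fun a _ => ?_
    rw [hP]; simp only []
    rw [← Finset.sum_sub_distrib]
  -- the exceptional set T
  set B := (Finset.univ.filter
    (fun u : Fin n => wt G kstar β u < 1 ∨ wt G' kstar β u < 1)) with hB
  set T := insert i B with hT
  have hBcard : ((B.card : ℝ)) ≤ k + k' := by
    rw [hk, hk']
    exact_mod_cast bad_union_card hn hβ G G' kstar
  have hiT : i ∈ T := Finset.mem_insert_self _ _
  have hTei : T.erase i ⊆ B := by
    rw [hT]; exact Finset.erase_insert_subset i B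
  have hTeicard : ((T.erase i).card : ℝ) ≤ k + k' := by
    refine le_trans ?_ hBcard
    exact_mod_cast Finset.card_le_card hTei
  have hTcard : ((T.card : ℝ)) ≤ k + k' + 1 := by
    have h1 : T.card ≤ B.card + 1 := Finset.card_insert_le _ _
    have h2 : ((T.card : ℝ)) ≤ (B.card : ℝ) + 1 := by exact_mod_cast h1
    linarith
  have hTn : ∀ a : Fin n, ((T.erase a).card : ℝ) ≤ (n:ℝ) - 1 := by
    intro a
    have h1 : (T.erase a).card ≤ (Finset.univ.erase a).card :=
      Finset.card_le_card (Finset.erase_subset_erase _ (Finset.subset_univ _))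
    have h2 : (Finset.univ.erase a).card = n - 1 := by
      rw [Finset.card_erase_of_mem (Finset.mem_univ _)]; simp
    have h4 : ((n - 1 : ℕ):ℝ) = (n:ℝ) - 1 := by
      have : 1 ≤ n := by omega
      push_cast [this]; ring
    rw [← h4]
    exact_mod_cast h2 ▸ h1
  have hwt_one : ∀ u, u ∉ T → wt G kstar β u = 1 ∧ wt G' kstar β u = 1 ∧ u ≠ i := by
    intro u hu
    rw [hT, Finset.mem_insert] at hu
    push_neg at hu
    have hB' := hu.2
    rw [hB] at hB'
    simp only [Finset.mem_filter, Finset.mem_univ, true_and, not_or, not_lt] at hB'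
    exact ⟨le_antisymm (wt_le_one hβ _ _ _) hB'.1,
      le_antisymm (wt_le_one hβ _ _ _) hB'.2, hu.1⟩
  have hvan : ∀ a b, a ∉ T → b ∉ T → Δ a b = 0 := by
    intro a b ha hb
    obtain ⟨ha1, ha2, hai⟩ := hwt_one a ha
    obtain ⟨hb1, hb2, hbi⟩ := hwt_one b hb
    have hadj : G.Adj a b ↔ G'.Adj a b := adj_eq_of_ne h hai hbi
    rw [hΔ]; simp only []
    rw [valPair, valPair, ha1, ha2, hb1, hb2, min_self]
    by_cases hA : G.Adj a b
    · rw [if_pos hA, if_pos (hadj.mp hA)]; ring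
    · rw [if_neg hA, if_neg (fun x => hA (hadj.mpr x))]; ring
  -- decomposition of the full sum
  have hPout : ∀ a ∈ Tᶜ, P a = ∑ b ∈ T, Δ a b := by
    intro a ha
    rw [Finset.mem_compl] at ha
    have hsub : T ⊆ Finset.univ.erase a := by
      intro u hu
      exact Finset.mem_erase.mpr ⟨fun he => ha (he ▸ hu), Finset.mem_univ _⟩
    rw [hP]; simp only []
    exact (Finset.sum_subset hsub (fun b _ hbT => hvan a b ha hbT)).symm
  have hswap : ∑ a ∈ Tᶜ, ∑ b ∈ T, Δ a b = ∑ a ∈ T, ∑ b ∈ Tᶜ, Δ a b := by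
    rw [Finset.sum_comm]
    exact Finset.sum_congr rfl fun a _ => Finset.sum_congr rfl fun b _ => hΔsym b a
  have hpart : ∀ a ∈ T, ∑ b ∈ Tᶜ, Δ a b = P a - ∑ b ∈ T.erase a, Δ a b := by
    intro a ha
    have hset : T.erase a ∪ Tᶜ = Finset.univ.erase a := by
      ext u
      simp only [Finset.mem_union, Finset.mem_erase, Finset.mem_compl, Finset.mem_univ,
        and_true, true_and]
      constructor
      · rintro (⟨h1, _⟩ | h1)
        · exact h1
        · exact fun he => h1 (he ▸ ha)
      · intro h1
        by_cases h2 : u ∈ T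
        · exact Or.inl ⟨h1, h2⟩
        · exact Or.inr h2
    have hdisj : Disjoint (T.erase a) Tᶜ :=
      Disjoint.mono_left (Finset.erase_subset _ _) disjoint_compl_right
    have hsu := Finset.sum_union (f := Δ a) hdisj
    rw [hset] at hsu
    rw [hP]; simp only []
    linarith [hsu]
  have hSdecomp : ∑ a, P a
      = 2 * (∑ a ∈ T, P a) - ∑ a ∈ T, ∑ b ∈ T.erase a, Δ a b := by
    have h0 : ∑ a ∈ T, P a + ∑ a ∈ Tᶜ, P a = ∑ a, P a := Finset.sum_add_sum_compl T P
    have h1 : ∑ a ∈ Tᶜ, P a = ∑ a ∈ Tᶜ, ∑ b ∈ T, Δ a b := Finset.sum_congr rfl hPout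
    have h2 : ∑ a ∈ T, ∑ b ∈ Tᶜ, Δ a b
        = ∑ a ∈ T, (P a - ∑ b ∈ T.erase a, Δ a b) := Finset.sum_congr rfl hpart
    rw [Finset.sum_sub_distrib] at h2
    linarith [h0, h1, hswap, h2]
  -- row bounds
  have hPi : |P i| ≤ 2*kstar + 8*k + 2*(1/β) + 12 := by
    have r1 := row_i_bound hn hβ G kstar hks i
    have r2 := row_i_bound hn hβ G' kstar hks i
    have ha := avgDeg_diff hn h
    rw [← hk] at r1
    rw [← hk'] at r2
    set A1 := (∑ u ∈ Finset.univ.erase i, valPair G kstar β i u) - avgDeg G with hA1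
    set A2 := (∑ u ∈ Finset.univ.erase i, valPair G' kstar β i u) - avgDeg G' with hA2
    have hPieq : P i = A1 - A2 + (avgDeg G - avgDeg G') := by
      rw [hP]; simp only []
      rw [hΔ]; simp only []
      rw [Finset.sum_sub_distrib, hA1, hA2]
      ring
    rw [hPieq]
    have t1 : |A1 - A2 + (avgDeg G - avgDeg G')|
        ≤ |A1| + |A2| + |avgDeg G - avgDeg G'| := by
      calc _ ≤ |A1 - A2| + |avgDeg G - avgDeg G'| := abs_add_le _ _
        _ ≤ _ := by linarith [abs_sub A1 A2]
    have hβinv : (0:ℝ) ≤ 1/β := by positivity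
    linarith [t1, r1, r2, ha, hk2]
  have hPv : ∀ v : Fin n, v ≠ i → |P v| ≤ 9*β*(kstar + 7*k + 14) + 13 := by
    intro v hv
    have hr := row_v_bound hn h kstar hks hβ hv
    rw [← hk] at hr
    rw [hP]; simp only [hΔ]
    exact hr
  have hL2pos : (0:ℝ) ≤ 9*β*(kstar + 7*k + 14) + 13 := by positivity
  have hTsum : ∑ a ∈ T, |P a| ≤ (2*kstar + 8*k + 2*(1/β) + 12)
      + (k + k') * (9*β*(kstar + 7*k + 14) + 13) := by
    have hTsplit : ∑ a ∈ T, |P a| = |P i| + ∑ a ∈ T.erase i, |P a| :=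
      (Finset.add_sum_erase _ _ hiT).symm
    rw [hTsplit]
    have hbound : ∑ a ∈ T.erase i, |P a|
        ≤ ((T.erase i).card : ℝ) * (9*β*(kstar + 7*k + 14) + 13) := by
      refine le_trans (Finset.sum_le_sum
        (fun a haT => hPv a (Finset.mem_erase.mp haT).1)) ?_
      rw [Finset.sum_const, nsmul_eq_mul]
    have : ((T.erase i).card : ℝ) * (9*β*(kstar + 7*k + 14) + 13)
        ≤ (k + k') * (9*β*(kstar + 7*k + 14) + 13) :=
      mul_le_mul_of_nonneg_right hTeicard hL2pos
    linarith [hPi, hbound]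
  -- the correction double sum
  have hpd : |edgeDensity G - edgeDensity G'| ≤ 2 / ((n:ℝ)-1) := edgeDensity_diff hn h
  have hpd0 : (0:ℝ) ≤ |edgeDensity G - edgeDensity G'| := abs_nonneg _
  have hDrow : ∀ a ∈ T.erase i, ∑ b ∈ T.erase a, |Δ a b|
      ≤ 2 + ((k + k' + 1) * (9*β) + 2) := by
    intro a haT
    have hai : a ≠ i := (Finset.mem_erase.mp haT).1
    have hiTa : i ∈ T.erase a := Finset.mem_erase.mpr ⟨Ne.symm hai, hiT⟩
    rw [← Finset.add_sum_erase _ _ hiTa]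
    have h1 : |Δ a i| ≤ 2 := val_diff_bound hn hβ G G' kstar a i
    have h2 : ∑ b ∈ (T.erase a).erase i, |Δ a b| ≤ (k + k' + 1) * (9*β) + 2 := by
      have hterm : ∀ b ∈ (T.erase a).erase i,
          |Δ a b| ≤ 9*β + |edgeDensity G - edgeDensity G'| :=
        fun b hb => val_diff_fine hn h kstar hβ hai (Finset.mem_erase.mp hb).1
      refine le_trans (Finset.sum_le_sum hterm) ?_
      rw [Finset.sum_const, nsmul_eq_mul]
      have hc1 : (((T.erase a).erase i).card : ℝ) ≤ k + k' + 1 := by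
        have hs : ((T.erase a).erase i).card ≤ T.card :=
          Finset.card_le_card (le_trans (Finset.erase_subset _ _) (Finset.erase_subset _ _))
        have : (((T.erase a).erase i).card : ℝ) ≤ (T.card : ℝ) := by exact_mod_cast hs
        linarith [hTcard]
      have hc2 : (((T.erase a).erase i).card : ℝ) ≤ (n:ℝ) - 1 := by
        have hs : ((T.erase a).erase i).card ≤ (T.erase a).card :=
          Finset.card_le_card (Finset.erase_subset _ _)
        have : (((T.erase a).erase i).card : ℝ) ≤ ((T.erase a).card : ℝ) := by exact_mod_cast hs
        linarith [hTn a]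
      have hfs : ((n:ℝ)-1) * (2/((n:ℝ)-1)) = 2 := by field_simp
      have hcnn : (0:ℝ) ≤ (((T.erase a).erase i).card : ℝ) := by positivity
      have e1 : (((T.erase a).erase i).card : ℝ) * (9*β) ≤ (k + k' + 1) * (9*β) := by
        have : (0:ℝ) ≤ 9*β := by positivity
        nlinarith
      have e2 : (((T.erase a).erase i).card : ℝ) * |edgeDensity G - edgeDensity G'| ≤ 2 := by
        calc _ ≤ ((n:ℝ)-1) * |edgeDensity G - edgeDensity G'| := by nlinarith
          _ ≤ ((n:ℝ)-1) * (2/((n:ℝ)-1)) := by nlinarith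
          _ = 2 := hfs
      nlinarith [e1, e2]
    linarith
  have hDi : ∑ b ∈ T.erase i, |Δ i b| ≤ (k + k') * 2 := by
    refine le_trans (Finset.sum_le_sum
      (fun b _ => val_diff_bound hn hβ G G' kstar i b)) ?_
    rw [Finset.sum_const, nsmul_eq_mul]
    nlinarith [hTeicard]
  have hD : |∑ a ∈ T, ∑ b ∈ T.erase a, Δ a b|
      ≤ (k + k') * 2 + (k + k') * (2 + ((k + k' + 1) * (9*β) + 2)) := by
    refine le_trans (Finset.abs_sum_le_sum_abs _ _) ?_
    have step : ∀ a ∈ T, |∑ b ∈ T.erase a, Δ a b| ≤ ∑ b ∈ T.erase a, |Δ a b| :=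
      fun a _ => Finset.abs_sum_le_sum_abs _ _
    refine le_trans (Finset.sum_le_sum step) ?_
    rw [← Finset.add_sum_erase _ _ hiT]
    have h2 : ∑ a ∈ T.erase i, ∑ b ∈ T.erase a, |Δ a b|
        ≤ ((T.erase i).card : ℝ) * (2 + ((k + k' + 1) * (9*β) + 2)) := by
      refine le_trans (Finset.sum_le_sum hDrow) ?_
      rw [Finset.sum_const, nsmul_eq_mul]
    have hpos2 : (0:ℝ) ≤ 2 + ((k + k' + 1) * (9*β) + 2) := by positivity
    have h3 : ((T.erase i).card : ℝ) * (2 + ((k + k' + 1) * (9*β) + 2))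
        ≤ (k + k') * (2 + ((k + k' + 1) * (9*β) + 2)) :=
      mul_le_mul_of_nonneg_right hTeicard hpos2
    linarith [hDi, h2, h3]
  -- put it together
  have hfinal : |fEst G kstar β - fEst G' kstar β|
      ≤ (∑ a ∈ T, |P a|) + |∑ a ∈ T, ∑ b ∈ T.erase a, Δ a b| / 2 := by
    rw [hdiff, hSdecomp]
    set SP := ∑ a ∈ T, P a with hSP
    set D := ∑ a ∈ T, ∑ b ∈ T.erase a, Δ a b with hDdef
    have e1 : (2 * SP - D)/2 = SP - D/2 := by ring
    rw [e1]
    have e2 : |SP - D/2| ≤ |SP| + |D/2| := abs_sub _ _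
    have e3 : |SP| ≤ ∑ a ∈ T, |P a| := Finset.abs_sum_le_sum_abs _ _
    have e4 : |D/2| = |D|/2 := by rw [abs_div]; norm_num
    linarith [e2, e3, e4.le, e4.ge]
  -- final arithmetic
  have hβinv : β * (1/β) = 1 := by field_simp
  have hinv1 : (1:ℝ) ≤ 1/β := by
    rw [le_div_iff₀ hβ]; linarith
  have hf1 : β * k ≤ k := by nlinarith
  have hf2 : β * kstar ≤ kstar := by nlinarith
  have hKk : k + k' ≤ 2*k + 2 := by linarith
  have hKnn : (0:ℝ) ≤ k + k' := by linarith
  have hq1 : (k + k') * (9*β*(kstar + 7*k + 14) + 13)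
      ≤ (2*k + 2) * (9*β*(kstar + 7*k + 14) + 13) :=
    mul_le_mul_of_nonneg_right hKk hL2pos
  have hq2 : (k + k') * 2 ≤ (2*k + 2) * 2 := by linarith
  have hq3 : (k + k') * (2 + ((k + k' + 1) * (9*β) + 2))
      ≤ (2*k + 2) * (2 + ((2*k + 3) * (9*β) + 2)) := by
    have hi1 : (2:ℝ) + ((k + k' + 1) * (9*β) + 2) ≤ 2 + ((2*k + 3) * (9*β) + 2) := by
      have : (k + k' + 1) * (9*β) ≤ (2*k + 3) * (9*β) := by nlinarith
      linarith
    have hpos : (0:ℝ) ≤ 2 + ((k + k' + 1) * (9*β) + 2) := by positivity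
    nlinarith [hKk, hKnn, hi1, hpos]
  have hbig : |fEst G kstar β - fEst G' kstar β|
      ≤ (2*kstar + 8*k + 2*(1/β) + 12)
        + (2*k + 2) * (9*β*(kstar + 7*k + 14) + 13)
        + ((2*k + 2) * 2 + (2*k + 2) * (2 + ((2*k + 3) * (9*β) + 2))) / 2 := by
    have := hfinal
    have := hTsum
    have := hD
    linarith [hfinal, hTsum, hD, hq1, hq2, hq3]
  refine le_trans hbig ?_
  nlinarith [hβinv, hinv1, hf1, hf2, hk1, hks, hβ.le, hβ1,
    mul_nonneg (mul_nonneg hβ.le (by linarith : (0:ℝ) ≤ k)) hks,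
    mul_nonneg hβ.le (mul_nonneg (by linarith : (0:ℝ) ≤ k) (by linarith : (0:ℝ) ≤ k)),
    mul_le_mul_of_nonneg_left hf1 (by linarith : (0:ℝ) ≤ k),
    mul_le_mul_of_nonneg_left hf2 (by linarith : (0:ℝ) ≤ k)]

end
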